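/- Let K be an algebraic closure of F_2, let F2(X,Y,Z) = (X+Y)^4 + X^2*Y^2 + X*Y*Z*(X+Y+Z) + Z^2*(X+Y+Z)^2 and let Q(X,Y,Z) = X^3*Y + Y^3*Z + Z^3*X (the Klein quartic), both regarded as homogeneous quartics over K. Then there exist an invertible 3-by-3 matrix A over K and a nonzero scalar c in K such that the polynomial obtained from Q by the linear substitution (X,Y,Z) -> A*(X,Y,Z) is equal to c*F2; that is, the curve C2 is a twist of the reduction modulo 2 of the Klein quartic. -/
import Mathlib

open MvPolynomial

/-- The plane quartic `F2` over the algebraic closure `K` of `𝔽₂`. -/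
noncomputable def F2K : MvPolynomial (Fin 3) (AlgebraicClosure (ZMod 2)) :=
  (X 0 + X 1) ^ 4 + (X 0) ^ 2 * (X 1) ^ 2
    + X 0 * X 1 * X 2 * (X 0 + X 1 + X 2)
    + (X 2) ^ 2 * (X 0 + X 1 + X 2) ^ 2

/-- The Klein quartic over the algebraic closure `K` of `𝔽₂`. -/
noncomputable def KleinK : MvPolynomial (Fin 3) (AlgebraicClosure (ZMod 2)) :=
  (X 0) ^ 3 * X 1 + (X 1) ^ 3 * X 2 + (X 2) ^ 3 * X 0

lemma key_ring {R : Type*} [CommRing R] (ca x y z : R)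
    (h2 : (2 : R) = 0) (h3 : ca ^ 3 = ca + 1) :
    ((1:R) * x + ca * y + ca ^ 2 * z) ^ 3 * (1 * x + (ca ^ 2 + ca) * y + ca * z)
      + (1 * x + (ca ^ 2 + ca) * y + ca * z) ^ 3 * (1 * x + ca ^ 2 * y + (ca ^ 2 + ca) * z)
      + (1 * x + ca ^ 2 * y + (ca ^ 2 + ca) * z) ^ 3 * (1 * x + ca * y + ca ^ 2 * z)
    = (x + y) ^ 4 + x ^ 2 * y ^ 2 + x * y * z * (x + y + z) + z ^ 2 * (x + y + z) ^ 2 := by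
  linear_combination (11 * z ^ 4 + 38 * y * z ^ 3 + 57 * y ^ 2 * z ^ 2 + 42 * y ^ 3 * z + 11 * y ^ 4 + 22 * x * z ^ 3 + 51 * x * y * z ^ 2 + 51 * x * y ^ 2 * z + 22 * x * y ^ 3 + 15 * x ^ 2 * z ^ 2 + 33 * x ^ 2 * y * z + 15 * x ^ 2 * y ^ 2 + 9 * ca * z ^ 4 + 28 * ca * y * z ^ 3 + 39 * ca * y ^ 2 * z ^ 2 + 32 * ca * y ^ 3 * z + 9 * ca * y ^ 4 + 14 * ca * x * z ^ 3 + 45 * ca * x * y * z ^ 2 + 45 * ca * x * y ^ 2 * z + 14 * ca * x * y ^ 3 + 9 * ca * x ^ 2 * z ^ 2 + 15 * ca * x ^ 2 * y * z + 9 * ca * x ^ 2 * y ^ 2 + 7 * ca ^ 2 * z ^ 4 + 22 * ca ^ 2 * y * z ^ 3 + 33 * ca ^ 2 * y ^ 2 * z ^ 2 + 22 * ca ^ 2 * y ^ 3 * z + 7 * ca ^ 2 * y ^ 4 + 12 * ca ^ 2 * x * z ^ 3 + 27 * ca ^ 2 * x * y * z ^ 2 + 33 * ca ^ 2 * x * y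 ^ 2 * z + 12 * ca ^ 2 * x * y ^ 3 + 4 * ca ^ 3 * z ^ 4 + 16 * ca ^ 3 * y * z ^ 3 + 24 * ca ^ 3 * y ^ 2 * z ^ 2 + 20 * ca ^ 3 * y ^ 3 * z + 4 * ca ^ 3 * y ^ 4 + 5 * ca ^ 3 * x * z ^ 3 + 12 * ca ^ 3 * x * y * z ^ 2 + 9 * ca ^ 3 * x * y ^ 2 * z + 5 * ca ^ 3 * x * y ^ 3 + 4 * ca ^ 4 * z ^ 4 + 8 * ca ^ 4 * y * z ^ 3 + 12 * ca ^ 4 * y ^ 2 * z ^ 2 + 10 * ca ^ 4 * y ^ 3 * z + 4 * ca ^ 4 * y ^ 4 + 1 * ca ^ 5 * z ^ 4 + 4 * ca ^ 5 * y * z ^ 3 + 3 * ca ^ 5 * y ^ 2 * z ^ 2 + 2 * ca ^ 5 * y ^ 3 * z + 1 * ca ^ 5 * y ^ 4) * h3 + (- (x * y * z ^ 2 + 2 * x * y ^ 3 + 3 * x ^ 2 * y ^ 2 + 2 * x ^ 3 * y + x * z ^ 3 + y * z ^ 3) + 5 * z ^ 4 + 19 * y * z ^ 3 + 28 * y ^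 2 * z ^ 2 + 21 * y ^ 3 * z + 5 * y ^ 4 + 11 * x * z ^ 3 + 25 * x * y * z ^ 2 + 25 * x * y ^ 2 * z + 11 * x * y ^ 3 + 7 * x ^ 2 * z ^ 2 + 16 * x ^ 2 * y * z + 7 * x ^ 2 * y ^ 2 + 1 * x ^ 4 + 10 * ca * z ^ 4 + 33 * ca * y * z ^ 3 + 48 * ca * y ^ 2 * z ^ 2 + 37 * ca * y ^ 3 * z + 10 * ca * y ^ 4 + 18 * ca * x * z ^ 3 + 48 * ca * x * y * z ^ 2 + 48 * ca * x * y ^ 2 * z + 18 * ca * x * y ^ 3 + 12 * ca * x ^ 2 * z ^ 2 + 24 * ca * x ^ 2 * y * z + 12 * ca * x ^ 2 * y ^ 2 + 4 * ca * x ^ 3 * z + 4 * ca * x ^ 3 * y + 8 * ca ^ 2 * z ^ 4 + 25 * ca ^ 2 * y * z ^ 3 + 36 * ca ^ 2 * y ^ 2 * z ^ 2 + 27 * ca ^ 2 * y ^ 3 * z + 8 * ca ^ 2 * y ^ 4 + 13 * ca ^ 2 * x * z ^ 3 + 36 * ca ^ 2 * x * y * z ^ 2 + 39 * ca ^ 2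 * x * y ^ 2 * z + 13 * ca ^ 2 * x * y ^ 3 + 9 * ca ^ 2 * x ^ 2 * z ^ 2 + 15 * ca ^ 2 * x ^ 2 * y * z + 9 * ca ^ 2 * x ^ 2 * y ^ 2 + 4 * ca ^ 2 * x ^ 3 * z + 4 * ca ^ 2 * x ^ 3 * y) * h2

theorem stmt_18 :
    ∃ (A : Matrix (Fin 3) (Fin 3) (AlgebraicClosure (ZMod 2)))
      (c : AlgebraicClosure (ZMod 2)),
      IsUnit A.det ∧ c ≠ 0 ∧
      (aeval fun i => ∑ j, C (A i j) * X j :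
          MvPolynomial (Fin 3) (AlgebraicClosure (ZMod 2)) →ₐ[AlgebraicClosure (ZMod 2)]
          MvPolynomial (Fin 3) (AlgebraicClosure (ZMod 2))) KleinK = C c * F2K := by
  set K := AlgebraicClosure (ZMod 2)
  have h2 : (2 : K) = 0 := by
    have := CharP.cast_eq_zero K 2
    exact_mod_cast this
  obtain ⟨α, hα⟩ : ∃ α : K, (Polynomial.X ^ 3 + Polynomial.X + 1 : Polynomial K).IsRoot α := by
    apply IsAlgClosed.exists_root
    have : (Polynomial.X ^ 3 + Polynomial.X + 1 : Polynomial K).degree = 3 := by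
      compute_degree!
    rw [this]; decide
  have hev : α ^ 3 + α + 1 = 0 := by
    simpa using hα
  have h3 : α ^ 3 = α + 1 := by linear_combination hev - (α + 1) * h2
  refine ⟨!![1, α, α ^ 2; 1, α ^ 2 + α, α; 1, α ^ 2, α ^ 2 + α], 1, ?_, one_ne_zero, ?_⟩
  · have : (!![1, α, α ^ 2; 1, α ^ 2 + α, α; 1, α ^ 2, α ^ 2 + α] : Matrix (Fin 3) (Fin 3) K).det = 1 := by
      rw [Matrix.det_fin_three]
      simp only [Matrix.of_apply, Matrix.cons_val', Matrix.cons_val_zero, Matrix.cons_val_one, Matrix.head_cons, Matrix.empty_val', Matrix.cons_val_fin_one, Matrix.head_fin_const, Matrix.cons_val_two, Matrix.tail_cons]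
      linear_combination (α - 1) * h3 + (α ^ 2 - 1) * h2
    rw [this]; exact isUnit_one
  · have h2' : (2 : MvPolynomial (Fin 3) K) = 0 := by
      have : (2 : MvPolynomial (Fin 3) K) = C (2 : K) := by
        rw [map_ofNat]
      rw [this, h2, map_zero]
    have h3' : (C α : MvPolynomial (Fin 3) K) ^ 3 = C α + 1 := by
      rw [← map_pow, h3, map_add, map_one]
    simp only [KleinK, F2K, map_add, map_mul, map_pow, aeval_X, C_1,
      Fin.sum_univ_three, Matrix.of_apply, Matrix.cons_val', Matrix.cons_val_zero, Matrix.cons_val_one, Matrix.head_cons, Matrix.empty_val', Matrix.cons_val_fin_one, Matrix.head_fin_const, Matrix.cons_val_two, Matrix.tail_cons]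
    have := key_ring (R := MvPolynomial (Fin 3) K) (C α) (X 0) (X 1) (X 2) h2' h3'
    simp only [map_add, map_pow, one_mul] at this ⊢
    linear_combination this
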